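/- arXiv:1802.05704 — 2 statements merged into one kernel-verified Lean document; each statement's English description precedes it below -/
import Mathlib

section
/- Let φ_λ : ℝⁿ × ℝ → ℝⁿ, λ ∈ [0,1], be a polar family of dissipative flows, K_0 the global attractor of φ_0, and (K_λ)_{λ∈[0,λ₁]} a continuation of K_0. For each λ let A_λ denote the global attractor of φ_λ. Then there exists λ₀ > 0 such that for 0 < λ < λ₀: K_λ ⊊ A_λ, K_λ is an attractor of φ_λ, the maximal compact invariant set C_λ of φ_λ contained in ℝⁿ ∖ K_λ satisfies ∅ ≠ C_λ ⊂ A_λ, and (K_λ, C_λ) is an attractor–repeller decomposition of A_λ, i.e. for every x ∈ A_λ with x ∉ K_λ ∪ C_λ one has ω_λ(x) ⊂ K_λ and ω*_λ(x) ⊂ C_λ. -/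
open Set Metric Filter Topology Bornology

section Defs

variable {M : Type*} [TopologicalSpace M]

/-- A (continuous) flow on a topological space. -/
def IsFlow (φ : M → ℝ → M) : Prop :=
  Continuous (fun p : M × ℝ => φ p.1 p.2) ∧
    (∀ x, φ x 0 = x) ∧ ∀ x s t, φ (φ x s) t = φ x (s + t)

/-- A set `S` is invariant for the flow `φ` if `φ(S,t) = S` for every `t`. -/
def FlowInvariant (φ : M → ℝ → M) (S : Set M) : Prop :=
  ∀ t : ℝ, (fun x => φ x t) '' S = S

/-- The omega-limit set `ω(x) = ⋂_{t>0} cl (φ(x,[t,∞)))`. -/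
def omegaLimitSet (φ : M → ℝ → M) (x : M) : Set M :=
  ⋂ t ∈ Ioi (0 : ℝ), closure (φ x '' Ici t)

/-- The negative omega-limit set `ω*(x) = ⋂_{t<0} cl (φ(x,(-∞,t]))`. -/
def negOmegaLimitSet (φ : M → ℝ → M) (x : M) : Set M :=
  ⋂ t ∈ Iio (0 : ℝ), closure (φ x '' Iic t)

/-- A flow is dissipative if every omega-limit set is nonempty and the closure of the
union of all omega-limit sets is compact. -/
def Dissipative (φ : M → ℝ → M) : Prop :=
  (∀ x, (omegaLimitSet φ x).Nonempty) ∧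
    IsCompact (closure (⋃ x, omegaLimitSet φ x))

/-- `K` is stable: every neighborhood `U` of `K` contains a neighborhood `V` of `K`
with `φ(V,[0,∞)) ⊆ U`. -/
def FlowStable (φ : M → ℝ → M) (K : Set M) : Prop :=
  ∀ U ∈ nhdsSet K, ∃ V ∈ nhdsSet K, ∀ x ∈ V, ∀ t : ℝ, 0 ≤ t → φ x t ∈ U

/-- `K` is negatively stable: every neighborhood `U` of `K` contains a neighborhood `V`
of `K` with `φ(V,(-∞,0]) ⊆ U`. -/
def FlowNegStable (φ : M → ℝ → M) (K : Set M) : Prop :=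
  ∀ U ∈ nhdsSet K, ∃ V ∈ nhdsSet K, ∀ x ∈ V, ∀ t : ℝ, t ≤ 0 → φ x t ∈ U

/-- The region of attraction `A(K) = {x : ∅ ≠ ω(x) ⊆ K}`. -/
def attractionRegion (φ : M → ℝ → M) (K : Set M) : Set M :=
  {x | (omegaLimitSet φ x).Nonempty ∧ omegaLimitSet φ x ⊆ K}

/-- The region of repulsion `R(K) = {x : ∅ ≠ ω*(x) ⊆ K}`. -/
def repulsionRegion (φ : M → ℝ → M) (K : Set M) : Set M :=
  {x | (negOmegaLimitSet φ x).Nonempty ∧ negOmegaLimitSet φ x ⊆ K}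

/-- An attractor: a compact invariant stable set which is attracting, i.e. its region of
attraction is a neighborhood of it. -/
def IsAttractor (φ : M → ℝ → M) (K : Set M) : Prop :=
  IsCompact K ∧ FlowInvariant φ K ∧ FlowStable φ K ∧
    attractionRegion φ K ∈ nhdsSet K

/-- A repeller: a compact invariant negatively stable set which is repelling. -/
def IsRepeller (φ : M → ℝ → M) (K : Set M) : Prop :=
  IsCompact K ∧ FlowInvariant φ K ∧ FlowNegStable φ K ∧
    repulsionRegion φ K ∈ nhdsSet K

/-- A global attractor: a compact invariant stable set whose region of attraction is the
whole space. -/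
def IsGlobalAttractor (φ : M → ℝ → M) (K : Set M) : Prop :=
  IsCompact K ∧ FlowInvariant φ K ∧ FlowStable φ K ∧
    attractionRegion φ K = univ

/-- `N` is an isolating neighborhood of `K`: a compact neighborhood of `K` such that `K`
is the maximal invariant set contained in `N`. -/
def IsIsolatingNbhd (φ : M → ℝ → M) (N K : Set M) : Prop :=
  IsCompact N ∧ K ⊆ interior N ∧ FlowInvariant φ K ∧
    ∀ S : Set M, FlowInvariant φ S → S ⊆ N → S ⊆ K

/-- An isolated invariant set: a compact invariant set having an isolating neighborhood. -/
def IsIsolatedInvariant (φ : M → ℝ → M) (K : Set M) : Prop :=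
  IsCompact K ∧ FlowInvariant φ K ∧ ∃ N, IsIsolatingNbhd φ N K

/-- A parametrized family of flows `(φ_λ)_{λ ∈ [0,1]}`: jointly continuous on
`[0,1] × M × ℝ` and each `φ_λ` is a flow. -/
def IsParamFlow (φ : ℝ → M → ℝ → M) : Prop :=
  ContinuousOn (fun p : ℝ × M × ℝ => φ p.1 p.2.1 p.2.2)
      ((Icc 0 1 : Set ℝ) ×ˢ (univ : Set (M × ℝ))) ∧
    ∀ l ∈ Icc (0 : ℝ) 1, IsFlow (φ l)

/-- `(K_λ)_{λ ∈ J}` is a continuation: each `K_λ` is an isolated invariant set of `φ_λ`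
and every isolating neighborhood of `K_{λ₀}` remains an isolating neighborhood of `K_λ`
for `λ` near `λ₀` in `J`. -/
def IsContinuation (φ : ℝ → M → ℝ → M) (J : Set ℝ) (K : ℝ → Set M) : Prop :=
  (∀ l ∈ J, IsIsolatedInvariant (φ l) (K l)) ∧
    ∀ l₀ ∈ J, ∀ N : Set M, IsIsolatingNbhd (φ l₀) N (K l₀) →
      ∃ δ > 0, ∀ l ∈ J, |l - l₀| < δ → IsIsolatingNbhd (φ l) N (K l)

/-- The family `(φ_λ)` is uniformly dissipative. -/
def UniformlyDissipative (φ : ℝ → M → ℝ → M) : Prop :=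
  (∀ l ∈ Icc (0 : ℝ) 1, ∀ x, (omegaLimitSet (φ l) x).Nonempty) ∧
    IsCompact (closure (⋃ l ∈ Icc (0 : ℝ) 1, ⋃ x, omegaLimitSet (φ l) x))

end Defs

section NormedDefs

variable {E : Type*} [NormedAddCommGroup E]

/-- A coercive family of dissipative flows: for every continuation of the global
attractor of `φ₀`, the regions of attraction are bounded for all small `λ > 0`. -/
def CoerciveFamily (φ : ℝ → E → ℝ → E) : Prop :=
  ∀ lam1 ∈ Ioc (0 : ℝ) 1, ∀ K : ℝ → Set E,
    IsContinuation φ (Icc 0 lam1) K → IsGlobalAttractor (φ 0) (K 0) →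
      ∃ lam0, 0 < lam0 ∧ lam0 ≤ lam1 ∧ ∀ l, 0 < l → l < lam0 →
        IsBounded (attractionRegion (φ l) (K l))

/-- A polar family of dissipative flows: it has arbitrarily large bounded trajectories. -/
def PolarFamily (φ : ℝ → E → ℝ → E) : Prop :=
  ∀ L > 0, ∃ lam0 > 0, ∀ l, 0 < l → l < lam0 → l ≤ 1 →
    ∃ x : E, IsBounded (range (φ l x)) ∧
      ∃ tl < (0 : ℝ), ∀ t < tl, L < ‖φ l x t‖

/-- The set of points whose trajectory tends to infinity in negative time
(the region of repulsion of the point at infinity). -/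
def escapeRegion (φ : ℝ → E → ℝ → E) (l : ℝ) : Set E :=
  {x | Tendsto (fun t => ‖φ l x t‖) atBot atTop}

/-- The complementary isolated invariant set
`C_λ = ℝⁿ ∖ (A_λ(K_λ) ∪ R_λ(∞))`. -/
def complementarySet (φ : ℝ → E → ℝ → E) (K : ℝ → Set E) (l : ℝ) : Set E :=
  (attractionRegion (φ l) (K l) ∪ escapeRegion φ l)ᶜ

end NormedDefs

section Aux

namespace APaux

variable {M : Type*} [MetricSpace M] {f : M → ℝ → M}

theorem flow_cont (hf : IsFlow f) (t : ℝ) : Continuous fun x => f x t :=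
  hf.1.comp (continuous_id.prodMk continuous_const)

theorem flow_zero (hf : IsFlow f) (x : M) : f x 0 = x := hf.2.1 x

theorem flow_add (hf : IsFlow f) (x : M) (s t : ℝ) : f (f x s) t = f x (s + t) :=
  hf.2.2 x s t

theorem flow_cancel (hf : IsFlow f) (x : M) (s : ℝ) : f (f x s) (-s) = x := by
  rw [flow_add hf, add_neg_cancel, flow_zero hf]

theorem flow_bijective (hf : IsFlow f) (t : ℝ) : Function.Bijective fun x => f x t := by
  refine Function.bijective_iff_has_inverse.2 ⟨fun x => f x (-t), fun x => flow_cancel hf x t,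
    fun x => ?_⟩
  simp only [flow_add hf, neg_add_cancel, flow_zero hf]

/-- A set closed under the flow in both time directions is invariant. -/
theorem flowInvariant_of_mem (hf : IsFlow f) {A : Set M}
    (h : ∀ r : ℝ, ∀ y ∈ A, f y r ∈ A) : FlowInvariant f A := by
  intro t
  apply Set.Subset.antisymm
  · rintro _ ⟨y, hy, rfl⟩; exact h t y hy
  · intro y hy
    exact ⟨f y (-t), h (-t) y hy, by
      show f (f y (-t)) t = y
      rw [flow_add hf, neg_add_cancel, flow_zero hf]⟩

theorem mem_of_flowInvariant {S : Set M} (hS : FlowInvariant f S) {x : M} (hx : x ∈ S)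
    (t : ℝ) : f x t ∈ S := by
  rw [← hS t]; exact ⟨x, hx, rfl⟩

/-- Tail intersections of an antitone family over `Ioi` do not depend on the left endpoint. -/
theorem biInter_Ioi_eq {F : ℝ → Set M} (hF : Antitone F) (a b : ℝ) :
    ⋂ t ∈ Ioi a, F t = ⋂ t ∈ Ioi b, F t := by
  have key : ∀ c d : ℝ, (⋂ t ∈ Ioi c, F t) ⊆ ⋂ t ∈ Ioi d, F t := by
    intro c d x hx
    simp only [mem_iInter, mem_Ioi] at hx ⊢
    intro t ht
    exact hF (le_max_left t (c + 1)) (hx _ (lt_of_lt_of_le (lt_add_one c) (le_max_right _ _)))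
  exact Set.Subset.antisymm (key a b) (key b a)

/-- Tail intersections of a monotone family over `Iio` do not depend on the right endpoint. -/
theorem biInter_Iio_eq {F : ℝ → Set M} (hF : Monotone F) (a b : ℝ) :
    ⋂ t ∈ Iio a, F t = ⋂ t ∈ Iio b, F t := by
  have key : ∀ c d : ℝ, (⋂ t ∈ Iio c, F t) ⊆ ⋂ t ∈ Iio d, F t := by
    intro c d x hx
    simp only [mem_iInter, mem_Iio] at hx ⊢
    intro t ht
    exact hF (min_le_left t (c - 1)) (hx _ (lt_of_le_of_lt (min_le_right _ _) (sub_one_lt c)))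
  exact Set.Subset.antisymm (key a b) (key b a)

theorem antitone_closure_Ici (x : M) : Antitone fun t => closure (f x '' Ici t) :=
  fun _ _ h => closure_mono (image_mono (Ici_subset_Ici.2 h))

theorem monotone_closure_Iic (x : M) : Monotone fun t => closure (f x '' Iic t) :=
  fun _ _ h => closure_mono (image_mono (Iic_subset_Iic.2 h))

theorem oml_eq (x : M) (a : ℝ) :
    omegaLimitSet f x = ⋂ t ∈ Ioi a, closure (f x '' Ici t) :=
  biInter_Ioi_eq (antitone_closure_Ici x) 0 a

theorem noml_eq (x : M) (a : ℝ) :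
    negOmegaLimitSet f x = ⋂ t ∈ Iio a, closure (f x '' Iic t) :=
  biInter_Iio_eq (monotone_closure_Iic x) 0 a

theorem oml_subset_closure (x : M) (t : ℝ) :
    omegaLimitSet f x ⊆ closure (f x '' Ici t) := by
  rw [oml_eq x (t - 1)]
  exact biInter_subset_of_mem (by simp [mem_Ioi])

theorem noml_subset_closure (x : M) (t : ℝ) :
    negOmegaLimitSet f x ⊆ closure (f x '' Iic t) := by
  rw [noml_eq x (t + 1)]
  exact biInter_subset_of_mem (by simp [mem_Iio])

theorem isClosed_oml (x : M) : IsClosed (omegaLimitSet f x) :=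
  isClosed_biInter fun _ _ => isClosed_closure

theorem isClosed_noml (x : M) : IsClosed (negOmegaLimitSet f x) :=
  isClosed_biInter fun _ _ => isClosed_closure

theorem oml_subset_of_tail {S : Set M} (hS : IsClosed S) {x : M} {t₀ : ℝ}
    (h : f x '' Ici t₀ ⊆ S) : omegaLimitSet f x ⊆ S :=
  (oml_subset_closure x t₀).trans (by rw [← hS.closure_eq]; exact closure_mono h)

theorem noml_subset_of_tail {S : Set M} (hS : IsClosed S) {x : M} {t₀ : ℝ}
    (h : f x '' Iic t₀ ⊆ S) : negOmegaLimitSet f x ⊆ S :=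
  (noml_subset_closure x t₀).trans (by rw [← hS.closure_eq]; exact closure_mono h)

theorem image_orbit_Ici (hf : IsFlow f) (x : M) (r t : ℝ) :
    (fun y => f y r) '' (f x '' Ici t) = f x '' Ici (t + r) := by
  rw [Set.image_image]
  have h1 : (fun u => f (f x u) r) = (f x) ∘ (fun u => u + r) := by
    funext u; exact flow_add hf x u r
  rw [h1, Set.image_comp, Set.image_add_const_Ici]

theorem image_orbit_Iic (hf : IsFlow f) (x : M) (r t : ℝ) :
    (fun y => f y r) '' (f x '' Iic t) = f x '' Iic (t + r) := by
  rw [Set.image_image]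
  have h1 : (fun u => f (f x u) r) = (f x) ∘ (fun u => u + r) := by
    funext u; exact flow_add hf x u r
  rw [h1, Set.image_comp, Set.image_add_const_Iic]

theorem oml_mem_shift (hf : IsFlow f) {x y : M} (hy : y ∈ omegaLimitSet f x) (r : ℝ) :
    f y r ∈ omegaLimitSet f x := by
  simp only [omegaLimitSet, mem_iInter, mem_Ioi]
  intro t ht
  have h1 : f y r ∈ closure ((fun z => f z r) '' (f x '' Ici (t - r))) :=
    (image_closure_subset_closure_image (flow_cont hf r))
      ⟨y, oml_subset_closure x (t - r) hy, rfl⟩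
  rwa [image_orbit_Ici hf, sub_add_cancel] at h1

theorem noml_mem_shift (hf : IsFlow f) {x y : M} (hy : y ∈ negOmegaLimitSet f x) (r : ℝ) :
    f y r ∈ negOmegaLimitSet f x := by
  simp only [negOmegaLimitSet, mem_iInter, mem_Iio]
  intro t ht
  have h1 : f y r ∈ closure ((fun z => f z r) '' (f x '' Iic (t - r))) :=
    (image_closure_subset_closure_image (flow_cont hf r))
      ⟨y, noml_subset_closure x (t - r) hy, rfl⟩
  rwa [image_orbit_Iic hf, sub_add_cancel] at h1

theorem oml_invariant (hf : IsFlow f) (x : M) : FlowInvariant f (omegaLimitSet f x) :=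
  flowInvariant_of_mem hf fun r _ hy => oml_mem_shift hf hy r

theorem noml_invariant (hf : IsFlow f) (x : M) : FlowInvariant f (negOmegaLimitSet f x) :=
  flowInvariant_of_mem hf fun r _ hy => noml_mem_shift hf hy r

theorem oml_shift (hf : IsFlow f) (x : M) (s : ℝ) :
    omegaLimitSet f (f x s) = omegaLimitSet f x := by
  have key : ∀ t : ℝ, closure (f (f x s) '' Ici t) = closure (f x '' Ici (s + t)) := by
    intro t
    congr 1
    have h1 : f (f x s) '' Ici t = ((f x) ∘ (fun u => s + u)) '' Ici t := by
      apply Set.image_congr'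
      intro u; exact flow_add hf x s u
    rw [h1, Set.image_comp, Set.image_const_add_Ici]
  have h2 : omegaLimitSet f (f x s) = ⋂ t ∈ Ioi (0 : ℝ), closure (f x '' Ici (s + t)) := by
    unfold omegaLimitSet
    exact iInter₂_congr fun t _ => key t
  have h3 : (⋂ t ∈ Ioi (0 : ℝ), closure (f x '' Ici (s + t))) =
      ⋂ u ∈ Ioi s, closure (f x '' Ici u) := by
    ext z
    simp only [mem_iInter, mem_Ioi]
    constructor
    · intro h u hu
      have := h (u - s) (by linarith)
      rwa [add_sub_cancel] at this
    · intro h t ht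
      exact h (s + t) (by linarith)
  rw [h2, h3, ← oml_eq]

theorem noml_nonempty [ProperSpace M] {x : M}
    (hb : IsBounded (f x '' Iic 0)) : (negOmegaLimitSet f x).Nonempty := by
  set D : ℕ → Set M := fun k => closure (f x '' Iic (-(k : ℝ))) with hD
  have hD0 : IsCompact (D 0) := by
    have : IsCompact (closure (f x '' Iic (0 : ℝ))) := hb.isCompact_closure
    simpa [hD] using this
  have hmono : ∀ k, D (k + 1) ⊆ D k := by
    intro k
    exact closure_mono (image_mono (Iic_subset_Iic.2 (by push_cast; linarith)))
  have hne : ∀ k, (D k).Nonempty :=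
    fun k => ⟨f x (-(k : ℝ)), subset_closure ⟨-(k : ℝ), mem_Iic.2 le_rfl, rfl⟩⟩
  have hcl : ∀ k, IsClosed (D k) := fun k => isClosed_closure
  obtain ⟨z, hz⟩ :=
    IsCompact.nonempty_iInter_of_sequence_nonempty_isCompact_isClosed D hmono hne hD0 hcl
  refine ⟨z, ?_⟩
  simp only [negOmegaLimitSet, mem_iInter, mem_Iio]
  intro t ht
  have hk : (-(⌈-t⌉₊ : ℝ)) ≤ t := by
    have := Nat.le_ceil (-t)
    linarith
  exact monotone_closure_Iic x hk (mem_iInter.mp hz ⌈-t⌉₊)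

theorem isOpen_orbit_box (hf : IsFlow f) {O : Set M} (hO : IsOpen O) (a b : ℝ) :
    IsOpen {x : M | ∀ t ∈ Icc a b, f x t ∈ O} := by
  rw [isOpen_iff_mem_nhds]
  intro x hx
  have hsub : ({x} : Set M) ×ˢ Icc a b ⊆ (fun p : M × ℝ => f p.1 p.2) ⁻¹' O := by
    rintro ⟨y, t⟩ ⟨hy, ht⟩
    simp only [mem_singleton_iff] at hy
    subst hy
    exact hx t ht
  obtain ⟨u, v, hu, hv, hxu, htv, huv⟩ :=
    generalized_tube_lemma isCompact_singleton isCompact_Icc (hO.preimage hf.1) hsub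
  refine mem_nhds_iff.2 ⟨u, ?_, hu, hxu rfl⟩
  intro y hy t ht
  exact huv (Set.mk_mem_prod hy (htv ht))

/-- Uniform attraction over compact sets, from stability and pointwise attraction. -/
theorem uniform_attract (hf : IsFlow f) {K : Set M} (hst : FlowStable f K)
    (hne : ∀ z : M, (omegaLimitSet f z).Nonempty)
    (hsub : ∀ z : M, omegaLimitSet f z ⊆ K)
    {S : Set M} (hS : IsCompact S) {U : Set M} (hU : U ∈ nhdsSet K) :
    ∃ T > 0, ∀ x ∈ S, ∀ t, T ≤ t → f x t ∈ U := by
  obtain ⟨V, hV, hVp⟩ := hst U hU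
  obtain ⟨OV, hOVo, hKOV, hOVV⟩ := mem_nhdsSet_iff_exists.mp hV
  have hz : ∀ z : M, ∃ t : ℝ, 0 ≤ t ∧ f z t ∈ OV := by
    intro z
    by_contra h
    push_neg at h
    have htail : f z '' Ici (0 : ℝ) ⊆ OVᶜ := by
      rintro _ ⟨u, hu, rfl⟩
      exact h u hu
    have : omegaLimitSet f z ⊆ OVᶜ := oml_subset_of_tail hOVo.isClosed_compl htail
    obtain ⟨w, hw⟩ := hne z
    exact this hw (hKOV (hsub z hw))
  choose tz htz0 htzO using hz
  have hcover : S ⊆ ⋃ z : M, (fun x => f x (tz z)) ⁻¹' OV := fun z _ =>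
    mem_iUnion.2 ⟨z, htzO z⟩
  obtain ⟨s, hs⟩ := hS.elim_finite_subcover (fun z : M => (fun x => f x (tz z)) ⁻¹' OV)
    (fun z => hOVo.preimage (flow_cont hf (tz z))) hcover
  refine ⟨1 + (s.sup fun z => ⌈tz z⌉₊ : ℕ), by positivity, ?_⟩
  intro x hx t ht
  obtain ⟨z, hzs, hxz⟩ := by
    have := hs hx
    simpa only [Finset.mem_coe, mem_iUnion, exists_prop] using this
  have htzle : tz z ≤ t := by
    have h1 : tz z ≤ (⌈tz z⌉₊ : ℝ) := Nat.le_ceil _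
    have h2 : (⌈tz z⌉₊ : ℕ) ≤ s.sup fun z => ⌈tz z⌉₊ := Finset.le_sup (f := fun z => ⌈tz z⌉₊) hzs
    have h2' : ((⌈tz z⌉₊ : ℕ) : ℝ) ≤ ((s.sup fun z => ⌈tz z⌉₊ : ℕ) : ℝ) := by exact_mod_cast h2
    linarith
  have : f x t = f (f x (tz z)) (t - tz z) := by
    rw [flow_add hf, add_sub_cancel]
  rw [this]
  exact hVp _ (hOVV hxz) _ (by linarith)

/-- Every bounded invariant set is contained in the global attractor. -/
theorem subset_globalAttractor [ProperSpace M] (hf : IsFlow f) {A : Set M}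
    (hGA : IsGlobalAttractor f A) {S : Set M} (hSb : IsBounded S)
    (hSi : FlowInvariant f S) : S ⊆ A := by
  obtain ⟨hAc, hAi, hAs, hAa⟩ := hGA
  have hpt : ∀ z : M, (omegaLimitSet f z).Nonempty ∧ omegaLimitSet f z ⊆ A := by
    intro z
    have : z ∈ attractionRegion f A := by rw [hAa]; trivial
    exact this
  rcases S.eq_empty_or_nonempty with rfl | ⟨x₀, hx₀⟩
  · exact empty_subset _
  have hAne : A.Nonempty := by
    obtain ⟨w, hw⟩ := (hpt x₀).1
    exact ⟨w, (hpt x₀).2 hw⟩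
  -- the closure of S is compact and invariant
  have hSc : IsCompact (closure S) := hSb.isCompact_closure
  have hSci : FlowInvariant f (closure S) := by
    apply flowInvariant_of_mem hf
    intro r y hy
    have h1 : f y r ∈ closure ((fun z => f z r) '' S) :=
      image_closure_subset_closure_image (flow_cont hf r) ⟨y, hy, rfl⟩
    rwa [hSi r] at h1
  suffices h : closure S ⊆ A from (subset_closure.trans h)
  have hthick : ∀ ε : ℝ, 0 < ε → closure S ⊆ thickening ε A := by
    intro ε hε
    obtain ⟨T, hT0, hT⟩ := uniform_attract hf hAs (fun z => (hpt z).1) (fun z => (hpt z).2)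
      hSc (isOpen_thickening.mem_nhdsSet.2 (self_subset_thickening hε A))
    intro y hy
    obtain ⟨w, hw, hwy⟩ : y ∈ (fun z => f z T) '' closure S := by rw [hSci T]; exact hy
    rw [← hwy]
    exact hT w hw T le_rfl
  intro y hy
  rw [← hAc.isClosed.closure_eq]
  rw [mem_closure_iff_infDist_zero hAne]
  by_contra h
  have hpos : 0 < infDist y A := lt_of_le_of_ne infDist_nonneg (Ne.symm h)
  have := hthick _ hpos hy
  rw [mem_thickening_iff_infDist_lt hAne] at this
  exact lt_irrefl _ this

/-- If the negative omega-limit set of `x` meets a compact stable set `K`, then `x ∈ K`. -/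
theorem capture (hf : IsFlow f) {K : Set M} (hst : FlowStable f K) (hK : IsCompact K)
    {x : M} (hmeet : (negOmegaLimitSet f x ∩ K).Nonempty) : x ∈ K := by
  obtain ⟨y, hyn, hyK⟩ := hmeet
  have hKne : K.Nonempty := ⟨y, hyK⟩
  have hthick : ∀ ε : ℝ, 0 < ε → x ∈ thickening ε K := by
    intro ε hε
    obtain ⟨V, hV, hVp⟩ := hst (thickening ε K)
      (isOpen_thickening.mem_nhdsSet.2 (self_subset_thickening hε K))
    obtain ⟨OV, hOVo, hKOV, hOVV⟩ := mem_nhdsSet_iff_exists.mp hV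
    have hycl : y ∈ closure (f x '' Iic (-1 : ℝ)) := noml_subset_closure x (-1) hyn
    obtain ⟨z, hzOV, hzim⟩ := (_root_.mem_closure_iff.mp hycl) OV hOVo (hKOV hyK)
    obtain ⟨u, hu, rfl⟩ := hzim
    have hx : f (f x u) (-u) = x := flow_cancel hf x u
    rw [← hx]
    exact hVp _ (hOVV hzOV) _ (by simp only [mem_Iic] at hu; linarith)
  rw [← hK.isClosed.closure_eq, mem_closure_iff_infDist_zero hKne]
  by_contra h
  have hpos : 0 < infDist x K := lt_of_le_of_ne infDist_nonneg (Ne.symm h)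
  have := hthick _ hpos
  rw [mem_thickening_iff_infDist_lt hKne] at this
  exact lt_irrefl _ this

/-- Perturbation lemma: a strict containment of a compact piece of the flow `φ 0` in an
open set persists for small positive parameters. -/
theorem perturb {φ : ℝ → M → ℝ → M}
    (hc : ContinuousOn (fun p : ℝ × M × ℝ => φ p.1 p.2.1 p.2.2)
      ((Icc 0 1 : Set ℝ) ×ˢ (univ : Set (M × ℝ))))
    {Q : Set (M × ℝ)} (hQ : IsCompact Q) {O : Set M} (hO : IsOpen O)
    (h0 : ∀ q ∈ Q, φ 0 q.1 q.2 ∈ O) :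
    ∃ δ > 0, ∀ l ∈ Icc (0 : ℝ) 1, l < δ → ∀ q ∈ Q, φ l q.1 q.2 ∈ O := by
  set ψ : ℝ × M × ℝ → M := fun p => φ (max 0 (min p.1 1)) p.2.1 p.2.2 with hψ
  have hψc : Continuous ψ := by
    have h := hc.comp_continuous
      (f := fun p : ℝ × M × ℝ => ((max 0 (min p.1 1), p.2) : ℝ × M × ℝ))
      ((continuous_const.max (continuous_fst.min continuous_const)).prodMk continuous_snd)
      (fun p => ⟨⟨le_max_left _ _, max_le (by norm_num) (min_le_right _ _)⟩, trivial⟩)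
    exact h
  have hsub : ({(0 : ℝ)} : Set ℝ) ×ˢ Q ⊆ ψ ⁻¹' O := by
    rintro ⟨l, q⟩ ⟨hl, hq⟩
    simp only [mem_singleton_iff] at hl
    subst hl
    have : max (0:ℝ) (min 0 1) = 0 := by norm_num
    simp only [mem_preimage, hψ, this]
    exact h0 q hq
  obtain ⟨u, v, hu, hv, h0u, hQv, huv⟩ :=
    generalized_tube_lemma isCompact_singleton hQ (hO.preimage hψc) hsub
  obtain ⟨δ, hδ, hball⟩ := Metric.isOpen_iff.mp hu 0 (h0u rfl)
  refine ⟨δ, hδ, ?_⟩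
  intro l hl hlδ q hq
  have hlu : l ∈ u := hball (by
    simp only [Metric.mem_ball, Real.dist_eq, sub_zero]
    rw [abs_of_nonneg hl.1]; exact hlδ)
  have := huv (Set.mk_mem_prod hlu (hQv hq))
  simp only [mem_preimage, hψ] at this
  rwa [min_eq_left hl.2, max_eq_right hl.1] at this

end APaux

end Aux

/-- For a polar family of dissipative flows on `ℝⁿ`, a continuation
`(K_λ)` of the global attractor `K₀` of `φ₀` and the global attractors `A_λ` of `φ_λ`:
for all small `λ > 0`, `K_λ ⊊ A_λ`, `K_λ` is an attractor, the maximal compact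
invariant set `C_λ ⊆ ℝⁿ ∖ K_λ` is nonempty and contained in `A_λ`, and `(K_λ, C_λ)` is
an attractor–repeller decomposition of `A_λ`. -/
theorem polar_attractor_repeller_decomposition {n : ℕ}
    (φ : ℝ → EuclideanSpace ℝ (Fin n) → ℝ → EuclideanSpace ℝ (Fin n))
    (hφ : IsParamFlow φ)
    (hdiss : ∀ l ∈ Icc (0 : ℝ) 1, Dissipative (φ l))
    (hpolar : PolarFamily φ)
    (lam1 : ℝ) (hlam1 : lam1 ∈ Ioc (0 : ℝ) 1)
    (K : ℝ → Set (EuclideanSpace ℝ (Fin n)))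
    (hcont : IsContinuation φ (Icc 0 lam1) K)
    (hK0 : IsGlobalAttractor (φ 0) (K 0))
    (A : ℝ → Set (EuclideanSpace ℝ (Fin n)))
    (hA : ∀ l ∈ Icc (0 : ℝ) 1, IsGlobalAttractor (φ l) (A l)) :
    ∃ lam0, 0 < lam0 ∧ lam0 ≤ lam1 ∧ ∀ l, 0 < l → l < lam0 →
      K l ⊂ A l ∧ IsAttractor (φ l) (K l) ∧
      ∃ C : Set (EuclideanSpace ℝ (Fin n)),
        IsCompact C ∧ FlowInvariant (φ l) C ∧ C ⊆ (K l)ᶜ ∧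
        (∀ S : Set (EuclideanSpace ℝ (Fin n)),
          IsCompact S → FlowInvariant (φ l) S → S ⊆ (K l)ᶜ → S ⊆ C) ∧
        C.Nonempty ∧ C ⊆ A l ∧
        ∀ x ∈ A l, x ∉ K l ∪ C →
          omegaLimitSet (φ l) x ⊆ K l ∧ negOmegaLimitSet (φ l) x ⊆ C := by
  classical
  obtain ⟨hjoint, hflows⟩ := hφ
  obtain ⟨hlam1pos, hlam1le⟩ := hlam1
  have h0mem : (0 : ℝ) ∈ Icc (0 : ℝ) 1 := ⟨le_rfl, zero_le_one⟩
  have flow0 : IsFlow (φ 0) := hflows 0 h0mem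
  obtain ⟨hK0c, hK0i, hK0s, hK0a⟩ := hK0
  have hpt0 : ∀ z, (omegaLimitSet (φ 0) z).Nonempty ∧ omegaLimitSet (φ 0) z ⊆ K 0 := by
    intro z
    have hz : z ∈ attractionRegion (φ 0) (K 0) := by rw [hK0a]; trivial
    exact hz
  -- the isolating neighborhood `P`
  set P : Set (EuclideanSpace ℝ (Fin n)) := cthickening 1 (K 0) with hPdef
  have hPcl : IsClosed P := isClosed_cthickening
  have hPb : IsBounded P := hK0c.isBounded.cthickening
  have hPc : IsCompact P := isCompact_of_isClosed_isBounded hPcl hPb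
  have hOsub : thickening 1 (K 0) ⊆ interior P :=
    isOpen_thickening.subset_interior_iff.2 (thickening_subset_cthickening 1 _)
  have hK0P : K 0 ⊆ interior P := (self_subset_thickening one_pos _).trans hOsub
  have hPiso : IsIsolatingNbhd (φ 0) P (K 0) := by
    refine ⟨hPc, hK0P, hK0i, ?_⟩
    intro S hSinv hSP
    exact APaux.subset_globalAttractor flow0 ⟨hK0c, hK0i, hK0s, hK0a⟩ (hPb.subset hSP) hSinv
  -- a uniform entering time `T` for the unperturbed flow
  obtain ⟨T, hT0, hTattr⟩ := APaux.uniform_attract flow0 hK0s (fun z => (hpt0 z).1)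
    (fun z => (hpt0 z).2) hPc
    (isOpen_thickening.mem_nhdsSet.2 (self_subset_thickening one_pos (K 0)))
  -- perturbation of a compact piece of the flow
  have hQstep : ∀ q ∈ P ×ˢ Icc T (2 * T), φ 0 q.1 q.2 ∈ thickening 1 (K 0) := by
    rintro ⟨y, t⟩ ⟨hy, ht⟩
    exact hTattr y hy t ht.1
  obtain ⟨δ₁, hδ₁, hpert⟩ :=
    APaux.perturb hjoint (hPc.prod isCompact_Icc) isOpen_thickening hQstep
  -- continuation of the isolating neighborhood
  have h0J : (0 : ℝ) ∈ Icc 0 lam1 := ⟨le_rfl, le_of_lt hlam1pos⟩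
  obtain ⟨δ₂, hδ₂, hcontP⟩ := hcont.2 0 h0J P hPiso
  -- bound for `P` and the polar family
  obtain ⟨L, hL0, hLP⟩ : ∃ L > 0, ∀ y ∈ P, ‖y‖ < L := by
    obtain ⟨c, hc⟩ := isBounded_iff_forall_norm_le.mp hPb
    exact ⟨max c 0 + 1, by positivity, fun y hy =>
      lt_of_le_of_lt ((hc y hy).trans (le_max_left _ _)) (lt_add_one _)⟩
  obtain ⟨lamP, hlamP0, hpol⟩ := hpolar L hL0
  refine ⟨min lam1 (min δ₁ (min δ₂ lamP)), by positivity, min_le_left _ _, ?_⟩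
  intro l hl0 hllt
  have hllam1 : l ≤ lam1 := le_of_lt (lt_of_lt_of_le hllt (min_le_left _ _))
  have hlδ₁ : l < δ₁ := lt_of_lt_of_le hllt ((min_le_right _ _).trans (min_le_left _ _))
  have hlδ₂ : l < δ₂ :=
    lt_of_lt_of_le hllt (((min_le_right _ _).trans (min_le_right _ _)).trans (min_le_left _ _))
  have hllamP : l < lamP :=
    lt_of_lt_of_le hllt (((min_le_right _ _).trans (min_le_right _ _)).trans (min_le_right _ _))
  have hl1 : l ≤ 1 := hllam1.trans hlam1le
  have hlJ : l ∈ Icc 0 lam1 := ⟨le_of_lt hl0, hllam1⟩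
  have hlIcc : l ∈ Icc (0 : ℝ) 1 := ⟨le_of_lt hl0, hl1⟩
  have flowl : IsFlow (φ l) := hflows l hlIcc
  -- the isolating neighborhood for `K l`
  have hIso : IsIsolatingNbhd (φ l) P (K l) :=
    hcontP l hlJ (by rwa [sub_zero, abs_of_pos hl0])
  obtain ⟨-, hKlP, hKlinv, hKlmax⟩ := hIso
  have hKlc : IsCompact (K l) := (hcont.1 l hlJ).1
  obtain ⟨hAlc, hAlinv, hAls, hAla⟩ := hA l hlIcc
  have hptl : ∀ z, (omegaLimitSet (φ l) z).Nonempty ∧ omegaLimitSet (φ l) z ⊆ A l := by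
    intro z
    have hz : z ∈ attractionRegion (φ l) (A l) := by rw [hAla]; trivial
    exact hz
  -- the basic step estimate for the perturbed flow
  have hstep : ∀ y ∈ P, ∀ t ∈ Icc T (2 * T), φ l y t ∈ thickening 1 (K 0) := by
    intro y hy t ht
    exact hpert l hlIcc hlδ₁ (y, t) ⟨hy, ht⟩
  have hd1 : ∀ y ∈ P, ∀ k : ℕ, φ l y (k * T) ∈ P := by
    intro y hy k
    induction k with
    | zero => simpa [APaux.flow_zero flowl] using hy
    | succ k ih =>
      have heq : φ l y (((k + 1 : ℕ) : ℝ) * T) = φ l (φ l y (k * T)) T := by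
        rw [APaux.flow_add flowl]; congr 1; push_cast; ring
      rw [heq]
      exact interior_subset (hOsub (hstep _ ih T ⟨le_rfl, by linarith⟩))
  have hd2 : ∀ y ∈ P, ∀ u, T ≤ u → φ l y u ∈ thickening 1 (K 0) := by
    intro y hy u hu
    set k : ℕ := ⌊(u - T) / T⌋₊ with hk
    have hfl : (k : ℝ) ≤ (u - T) / T := Nat.floor_le (div_nonneg (by linarith) hT0.le)
    have h1 : (k : ℝ) * T ≤ u - T := by
      have := mul_le_mul_of_nonneg_right hfl hT0.le
      rwa [div_mul_cancel₀ _ (ne_of_gt hT0)] at this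
    have hfl2 : (u - T) / T < (k : ℝ) + 1 := Nat.lt_floor_add_one _
    have h2 : u - T < ((k : ℝ) + 1) * T := by
      have := mul_lt_mul_of_pos_right hfl2 hT0
      rwa [div_mul_cancel₀ _ (ne_of_gt hT0)] at this
    have h3 : φ l y u = φ l (φ l y (k * T)) (u - k * T) := by
      rw [APaux.flow_add flowl]; congr 1; ring
    rw [h3]
    exact hstep _ (hd1 y hy k) _ ⟨by linarith, by nlinarith⟩
  have hd2' : ∀ y ∈ P, ∀ u, T ≤ u → φ l y u ∈ interior P := fun y hy u hu =>
    hOsub (hd2 y hy u hu)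
  -- any orbit hitting `P` is attracted to `K l`
  have homlP : ∀ y ∈ P, omegaLimitSet (φ l) y ⊆ K l := by
    intro y hy
    apply hKlmax
    · exact APaux.oml_invariant flowl y
    · apply APaux.oml_subset_of_tail hPcl (t₀ := T)
      rintro _ ⟨u, hu, rfl⟩
      exact interior_subset (hd2' y hy u hu)
  have hattr : ∀ x, (∃ t : ℝ, φ l x t ∈ P) → omegaLimitSet (φ l) x ⊆ K l := by
    rintro x ⟨t, ht⟩
    have h := homlP _ ht
    rwa [APaux.oml_shift flowl x t] at h
  -- the region `W`
  set W : Set (EuclideanSpace ℝ (Fin n)) :=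
    ⋃ t : ℝ, (fun x => φ l x t) ⁻¹' interior P with hWdef
  have hWopen : IsOpen W :=
    isOpen_iUnion fun t => isOpen_interior.preimage (APaux.flow_cont flowl t)
  have hWattr : ∀ x ∈ W, omegaLimitSet (φ l) x ⊆ K l := by
    intro x hx
    obtain ⟨t, ht⟩ := mem_iUnion.mp hx
    exact hattr x ⟨t, interior_subset ht⟩
  have hWmem : ∀ r : ℝ, ∀ x ∈ W, φ l x r ∈ W := by
    intro r x hx
    obtain ⟨t, ht⟩ := mem_iUnion.mp hx
    refine mem_iUnion.2 ⟨t - r, ?_⟩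
    simp only [mem_preimage] at ht ⊢
    rw [APaux.flow_add flowl, add_sub_cancel]
    exact ht
  have hintPW : interior P ⊆ W := fun x hx =>
    mem_iUnion.2 ⟨0, by simpa [mem_preimage, APaux.flow_zero flowl] using hx⟩
  have hKlW : K l ⊆ W := hKlP.trans hintPW
  -- maximality of the global attractor `A l`
  have hmaxA : ∀ S, IsBounded S → FlowInvariant (φ l) S → S ⊆ A l := fun S hb hi =>
    APaux.subset_globalAttractor flowl ⟨hAlc, hAlinv, hAls, hAla⟩ hb hi
  have hKlA : K l ⊆ A l := hmaxA _ hKlc.isBounded hKlinv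
  -- the polar trajectory and its negative limit set
  obtain ⟨x₀, hx₀b, t₀, ht₀0, hx₀far⟩ := hpol l hl0 hllamP hl1
  have hx₀orbb : IsBounded (φ l x₀ '' Iic 0) := hx₀b.subset (image_subset_range _ _)
  set Cω := negOmegaLimitSet (φ l) x₀ with hCω
  have hCωne : Cω.Nonempty := APaux.noml_nonempty hx₀orbb
  have hCωinv : FlowInvariant (φ l) Cω := APaux.noml_invariant flowl x₀
  have hCωb : IsBounded Cω := hx₀b.closure.subset
    ((APaux.noml_subset_closure x₀ (-1)).trans (closure_mono (image_subset_range _ _)))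
  have hCωcompact : IsCompact Cω :=
    isCompact_of_isClosed_isBounded (APaux.isClosed_noml x₀) hCωb
  have hCωfar : ∀ y ∈ Cω, L ≤ ‖y‖ := by
    intro y hy
    have h1 : Cω ⊆ closure (φ l x₀ '' Iic (t₀ - 1)) := APaux.noml_subset_closure x₀ (t₀ - 1)
    have h2 : φ l x₀ '' Iic (t₀ - 1) ⊆ {z : EuclideanSpace ℝ (Fin n) | L ≤ ‖z‖} := by
      rintro _ ⟨u, hu, rfl⟩
      exact le_of_lt (hx₀far u (by simp only [mem_Iic] at hu; linarith))
    have h3 : closure (φ l x₀ '' Iic (t₀ - 1)) ⊆ {z : EuclideanSpace ℝ (Fin n) | L ≤ ‖z‖} :=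
      closure_minimal h2 (isClosed_le continuous_const continuous_norm)
    exact h3 (h1 hy)
  have hCωKc : Cω ⊆ (K l)ᶜ := by
    intro y hy hyK
    exact absurd (hLP y (interior_subset (hKlP hyK))) (not_lt.2 (hCωfar y hy))
  have hCωA : Cω ⊆ A l := hmaxA _ hCωb hCωinv
  have hssub : K l ⊂ A l := by
    rw [Set.ssubset_iff_subset_ne]
    refine ⟨hKlA, fun heq => ?_⟩
    obtain ⟨y, hy⟩ := hCωne
    have hyA : y ∈ A l := hCωA hy
    rw [← heq] at hyA
    exact hCωKc hy hyA
  -- stability of `K l`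
  set Lam : ℕ → Set (EuclideanSpace ℝ (Fin n)) := fun k => (fun y => φ l y (k * T)) '' P
    with hLam
  have hLam0 : Lam 0 = P := by
    ext y
    simp [hLam, APaux.flow_zero flowl]
  have hLamC : ∀ k, IsCompact (Lam k) := fun k => hPc.image (APaux.flow_cont flowl _)
  have hLamantitone : ∀ k m : ℕ, k ≤ m → Lam m ⊆ Lam k := by
    intro k m hkm
    rintro _ ⟨y, hy, rfl⟩
    refine ⟨φ l y ((m - k : ℕ) * T), hd1 y hy (m - k), ?_⟩
    show φ l (φ l y (((m - k : ℕ) : ℝ) * T)) (((k : ℕ) : ℝ) * T) = φ l y (((m : ℕ) : ℝ) * T)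
    rw [APaux.flow_add flowl]
    congr 1
    rw [Nat.cast_sub hkm]
    ring
  have hScap : FlowInvariant (φ l) (⋂ k, Lam k) := by
    apply APaux.flowInvariant_of_mem flowl
    intro s x hx
    rw [mem_iInter] at hx ⊢
    intro m
    set c : ℕ := ⌈|s| / T⌉₊ with hc
    have hcT : |s| ≤ (c : ℝ) * T := by
      have h1 : |s| / T ≤ (c : ℝ) := Nat.le_ceil _
      have h2 := mul_le_mul_of_nonneg_right h1 hT0.le
      rwa [div_mul_cancel₀ _ (ne_of_gt hT0)] at h2
    obtain ⟨y, hy, hxy⟩ := hx (m + 1 + c)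
    have hTu : T ≤ ((m + 1 + c : ℕ) : ℝ) * T + s - (m : ℝ) * T := by
      push_cast
      nlinarith [hcT, neg_abs_le s]
    have key : φ l x s =
        φ l (φ l y (((m + 1 + c : ℕ) : ℝ) * T + s - (m : ℝ) * T)) ((m : ℝ) * T) := by
      rw [APaux.flow_add flowl, ← hxy, APaux.flow_add flowl]
      congr 1
      ring
    rw [key]
    exact ⟨_, interior_subset (hd2' y hy _ hTu), rfl⟩
  have hcapKl : (⋂ k, Lam k) ⊆ K l :=
    hKlmax _ hScap ((iInter_subset _ 0).trans hLam0.subset)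
  have hstable : FlowStable (φ l) (K l) := by
    intro U hU
    obtain ⟨OU, hOUo, hKOU, hOUU⟩ := mem_nhdsSet_iff_exists.mp hU
    obtain ⟨k₀, hk₀⟩ : ∃ k₀, Lam k₀ ⊆ OU := by
      apply exists_subset_nhds_of_isCompact' (V := Lam)
      · intro i j
        exact ⟨max i j, hLamantitone _ _ (le_max_left _ _),
          hLamantitone _ _ (le_max_right _ _)⟩
      · exact hLamC
      · exact fun k => (hLamC k).isClosed
      · intro x hx
        exact hOUo.mem_nhds (hKOU (hcapKl hx))
    refine ⟨interior P ∩ {x | ∀ t ∈ Icc 0 (((k₀ : ℝ) + 1) * T), φ l x t ∈ OU}, ?_, ?_⟩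
    · apply mem_nhdsSet_iff_exists.2
      refine ⟨_, isOpen_interior.inter (APaux.isOpen_orbit_box flowl hOUo 0 _), ?_, subset_rfl⟩
      intro x hx
      exact ⟨hKlP hx, fun t _ => hKOU (APaux.mem_of_flowInvariant hKlinv hx t)⟩
    · intro x hx t ht0
      rcases le_or_gt t (((k₀ : ℝ) + 1) * T) with h | h
      · exact hOUU (hx.2 t ⟨ht0, h⟩)
      · have hxP : x ∈ P := interior_subset hx.1
        have hTle : T ≤ t - (k₀ : ℝ) * T := by nlinarith
        have hbase : φ l x (t - (k₀ : ℝ) * T) ∈ P :=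
          interior_subset (hd2' x hxP _ hTle)
        have heq : φ l x t = φ l (φ l x (t - (k₀ : ℝ) * T)) ((k₀ : ℝ) * T) := by
          rw [APaux.flow_add flowl]; congr 1; ring
        rw [heq]
        exact hOUU (hk₀ ⟨_, hbase, rfl⟩)
  -- `K l` is an attractor
  have hregion : interior P ⊆ attractionRegion (φ l) (K l) := by
    intro x hx
    exact ⟨(hptl x).1, hattr x ⟨0, by
      rw [APaux.flow_zero flowl]; exact interior_subset hx⟩⟩
  have hattractor : IsAttractor (φ l) (K l) :=
    ⟨hKlc, hKlinv, hstable,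
      mem_nhdsSet_iff_exists.2 ⟨interior P, isOpen_interior, hKlP, hregion⟩⟩
  -- the complementary set `C`
  set C := A l ∩ Wᶜ with hCdef
  have hCc : IsCompact C := hAlc.inter_right hWopen.isClosed_compl
  have hCinv : FlowInvariant (φ l) C := by
    apply APaux.flowInvariant_of_mem flowl
    intro r x hx
    refine ⟨APaux.mem_of_flowInvariant hAlinv hx.1 r, fun hmem => ?_⟩
    have hxW : x ∈ W := by
      have h := hWmem (-r) _ hmem
      rwa [APaux.flow_cancel flowl] at h
    exact hx.2 hxW
  have hCKc : C ⊆ (K l)ᶜ := fun x hx hxK => hx.2 (hKlW hxK)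
  have hCmax : ∀ S, IsCompact S → FlowInvariant (φ l) S → S ⊆ (K l)ᶜ → S ⊆ C := by
    intro S hSc hSi hSK x hx
    refine ⟨hmaxA S hSc.isBounded hSi hx, fun hxW => ?_⟩
    have h1 : omegaLimitSet (φ l) x ⊆ K l := hWattr x hxW
    have h2 : omegaLimitSet (φ l) x ⊆ S := by
      apply APaux.oml_subset_of_tail hSc.isClosed (t₀ := 0)
      rintro _ ⟨u, _, rfl⟩
      exact APaux.mem_of_flowInvariant hSi hx u
    obtain ⟨w, hw⟩ := (hptl x).1
    exact hSK (h2 hw) (h1 hw)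
  have hCne : C.Nonempty := hCωne.mono (hCmax Cω hCωcompact hCωinv hCωKc)
  refine ⟨hssub, hattractor, C, hCc, hCinv, hCKc, hCmax, hCne, inter_subset_left, ?_⟩
  intro x hxA hxKC
  simp only [Set.mem_union, not_or] at hxKC
  obtain ⟨hxK, hxC⟩ := hxKC
  have hxW : x ∈ W := by
    by_contra h
    exact hxC ⟨hxA, h⟩
  refine ⟨hWattr x hxW, ?_⟩
  have hNxA : negOmegaLimitSet (φ l) x ⊆ A l := by
    apply APaux.noml_subset_of_tail hAlc.isClosed (t₀ := 0)
    rintro _ ⟨u, _, rfl⟩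
    exact APaux.mem_of_flowInvariant hAlinv hxA u
  have hNxK : negOmegaLimitSet (φ l) x ⊆ (K l)ᶜ := by
    intro y hy hyK
    exact hxK (APaux.capture flowl hstable hKlc ⟨y, hy, hyK⟩)
  exact hCmax _ (hAlc.of_isClosed_subset (APaux.isClosed_noml x) hNxA)
    (APaux.noml_invariant flowl x) hNxK
end

section
/- Let φ_λ : ℝⁿ × ℝ → ℝⁿ, λ ∈ [0,1], be a parametrized family of dissipative flows, K_0 the global attractor of φ_0, and (K_λ)_{λ∈[0,λ₁]} a continuation of K_0 with each K_λ (λ > 0) an attractor of φ_λ. Then there exists λ₀ > 0 such that for every λ with 0 < λ < λ₀ the set K_λ is cellular: it has a neighborhood basis in ℝⁿ consisting of sets homeomorphic to the closed unit ball of ℝⁿ (obtained as images φ_λ(B,t) of a fixed closed ball B ⊃ K_λ contained in A_λ(K_λ)). -/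
open Set Metric Filter Topology Bornology

section Aux

variable {M : Type*} [TopologicalSpace M]

/-- The time-`t` map of a flow as a homeomorphism. -/
def flowHomeo {ψ : M → ℝ → M} (h : IsFlow ψ) (t : ℝ) : M ≃ₜ M where
  toFun x := ψ x t
  invFun x := ψ x (-t)
  left_inv x := by show ψ (ψ x t) (-t) = x; rw [h.2.2, add_neg_cancel, h.2.1]
  right_inv x := by show ψ (ψ x (-t)) t = x; rw [h.2.2, neg_add_cancel, h.2.1]
  continuous_toFun := h.1.comp (continuous_id.prodMk continuous_const)
  continuous_invFun := h.1.comp (continuous_id.prodMk continuous_const)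

lemma flowHomeo_apply {ψ : M → ℝ → M} (h : IsFlow ψ) (t : ℝ) (x : M) :
    flowHomeo h t x = ψ x t := rfl

/-- Omega-limit sets are invariant. -/
lemma flowInvariant_omega {ψ : M → ℝ → M} (h : IsFlow ψ) (x : M) :
    FlowInvariant ψ (omegaLimitSet ψ x) := by
  have key : ∀ t z, z ∈ omegaLimitSet ψ x → ψ z t ∈ omegaLimitSet ψ x := by
    intro t z hz
    simp only [omegaLimitSet, mem_iInter, mem_Ioi] at hz ⊢
    intro s hs
    have hz' := hz (s + |t| + 1) (by have := abs_nonneg t; linarith)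
    have hcg : Continuous (fun y => ψ y t) :=
      h.1.comp (continuous_id.prodMk continuous_const)
    have h1 : ψ z t ∈ closure ((fun y => ψ y t) '' (ψ x '' Ici (s + |t| + 1))) :=
      (image_closure_subset_closure_image hcg) (mem_image_of_mem _ hz')
    refine closure_mono ?_ h1
    rintro _ ⟨_, ⟨u, hu, rfl⟩, rfl⟩
    refine ⟨u + t, ?_, (h.2.2 x u t).symm⟩
    have := abs_nonneg t
    have := neg_abs_le t
    simp only [mem_Ici] at hu ⊢
    linarith
  intro t
  apply Subset.antisymm
  · rintro _ ⟨z, hz, rfl⟩; exact key t z hz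
  · intro z hz
    exact ⟨ψ z (-t), key (-t) z hz, by show ψ (ψ z (-t)) t = z; rw [h.2.2, neg_add_cancel, h.2.1]⟩

/-- If the forward orbit eventually enters a closed set, the omega-limit set lies in it. -/
lemma omega_subset_of_eventually {ψ : M → ℝ → M} {x : M} {N : Set M} (hN : IsClosed N)
    {t₀ : ℝ} (ht₀ : 0 ≤ t₀) (h : ∀ s, t₀ ≤ s → ψ x s ∈ N) :
    omegaLimitSet ψ x ⊆ N := by
  intro z hz
  have h1 : z ∈ closure (ψ x '' Ici (t₀ + 1)) := by
    simp only [omegaLimitSet, mem_iInter, mem_Ioi] at hz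
    exact hz (t₀ + 1) (by linarith)
  have h2 : ψ x '' Ici (t₀ + 1) ⊆ N := by
    rintro _ ⟨u, hu, rfl⟩; exact h u (by simp only [mem_Ici] at hu; linarith)
  exact hN.closure_subset ((closure_mono h2) h1)

/-- The forward orbit of a point whose omega-limit set lies in an open set `W`
eventually visits `W`. -/
lemma exists_enter {ψ : M → ℝ → M} {x : M} {W : Set M}
    (hne : (omegaLimitSet ψ x).Nonempty) (hsub : omegaLimitSet ψ x ⊆ W)
    (hW : IsOpen W) : ∃ t, 0 ≤ t ∧ ψ x t ∈ W := by
  obtain ⟨y, hy⟩ := hne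
  have h1 : y ∈ closure (ψ x '' Ici 1) := by
    simp only [omegaLimitSet, mem_iInter, mem_Ioi] at hy
    exact hy 1 one_pos
  have h2 : (W ∩ ψ x '' Ici 1).Nonempty :=
    _root_.mem_closure_iff.mp h1 W hW (hsub hy)
  obtain ⟨_, hw, u, hu, rfl⟩ := h2
  exact ⟨u, le_trans zero_le_one hu, hw⟩

lemma finset_min_pos {ι : Type*} (s : Finset ι) (f : ι → ℝ) (h : ∀ i ∈ s, 0 < f i) :
    ∃ δ, 0 < δ ∧ ∀ i ∈ s, δ ≤ f i := by
  classical
  induction s using Finset.induction_on with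
  | empty => exact ⟨1, one_pos, by simp⟩
  | insert _ _ ha ih =>
    rename_i a s'
    obtain ⟨δ, hδ, hδle⟩ := ih (fun i hi => h i (Finset.mem_insert_of_mem hi))
    refine ⟨min δ (f a), lt_min hδ (h a (Finset.mem_insert_self a s')), ?_⟩
    intro i hi
    rcases Finset.mem_insert.mp hi with rfl | hi
    · exact min_le_right _ _
    · exact (min_le_left _ _).trans (hδle i hi)

lemma finset_max {ι : Type*} (s : Finset ι) (f : ι → ℝ) :
    ∃ T, 0 ≤ T ∧ ∀ i ∈ s, f i ≤ T := by
  classical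
  induction s using Finset.induction_on with
  | empty => exact ⟨0, le_refl _, by simp⟩
  | insert _ _ ha ih =>
    rename_i a s'
    obtain ⟨T, hT, hTle⟩ := ih
    refine ⟨max T (f a), le_trans hT (le_max_left _ _), ?_⟩
    intro i hi
    rcases Finset.mem_insert.mp hi with rfl | hi
    · exact le_max_right _ _
    · exact (hTle i hi).trans (le_max_left _ _)

/-- Uniform attraction: a compact subset of the region of attraction of a stable set
is uniformly attracted to any neighborhood. -/
lemma uniform_attract {ψ : M → ℝ → M} (hψ : IsFlow ψ)
    {Kk B : Set M} (hst : FlowStable ψ Kk) (hB : IsCompact B)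
    (hBA : B ⊆ attractionRegion ψ Kk) {U : Set M} (hU : U ∈ nhdsSet Kk) :
    ∃ T, 0 ≤ T ∧ ∀ x ∈ B, ∀ s, T ≤ s → ψ x s ∈ U := by
  obtain ⟨V, hV, hVU⟩ := hst U hU
  have hKW : Kk ⊆ interior V := subset_interior_iff_mem_nhdsSet.mpr hV
  have hx : ∀ x, x ∈ B → ∃ t, 0 ≤ t ∧ ψ x t ∈ interior V := fun x hxB =>
    exists_enter (hBA hxB).1 ((hBA hxB).2.trans hKW) isOpen_interior
  choose! t ht hWt using hx
  have hopen : ∀ i : B, IsOpen ((fun y => ψ y (t i)) ⁻¹' interior V) := fun i =>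
    isOpen_interior.preimage (hψ.1.comp (continuous_id.prodMk continuous_const))
  obtain ⟨sfin, hsfin⟩ := hB.elim_finite_subcover
    (fun i : B => (fun y => ψ y (t i)) ⁻¹' interior V) hopen
    (fun x hxB => mem_iUnion.mpr ⟨⟨x, hxB⟩, hWt x hxB⟩)
  obtain ⟨T, hT0, hTle⟩ := finset_max sfin (fun i => t i)
  refine ⟨T, hT0, ?_⟩
  intro x hxB s hs
  obtain ⟨i, hi, hxi⟩ := mem_iUnion₂.mp (hsfin hxB)
  have hti : t i ≤ s := le_trans (hTle i hi) hs
  have := hVU _ (interior_subset hxi) (s - t i) (by linarith)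
  rwa [hψ.2.2, add_sub_cancel] at this

end Aux

section Aux2

variable {M : Type*} [TopologicalSpace M]

/-- Iterating the flow along a set `C` which returns to itself at time `T` while staying
in `N` keeps the whole forward orbit in `N`. -/
lemma ladder {ψ : M → ℝ → M} (hψ : IsFlow ψ)
    {C Nset : Set M} {T : ℝ} (hT : 0 < T)
    (h1 : ∀ y ∈ C, ∀ s, 0 ≤ s → s ≤ T → ψ y s ∈ Nset)
    (h2 : ∀ y ∈ C, ψ y T ∈ C) :
    ∀ y ∈ C, ∀ s, 0 ≤ s → ψ y s ∈ Nset := by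
  intro y hy
  have hk : ∀ k : ℕ, ψ y (k * T) ∈ C := by
    intro k
    induction k with
    | zero => simpa [hψ.2.1] using hy
    | succ k ih =>
      have h2' := h2 _ ih
      rw [hψ.2.2] at h2'
      convert h2' using 2
      push_cast; ring
  intro s hs
  set k := ⌊s / T⌋₊ with hkdef
  have hk1 : (k : ℝ) * T ≤ s := by
    rw [← le_div_iff₀ hT]
    exact Nat.floor_le (div_nonneg hs hT.le)
  have hk2 : s - k * T ≤ T := by
    have h3 := Nat.lt_floor_add_one (s / T)
    rw [div_lt_iff₀ hT] at h3
    nlinarith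
  have := h1 _ (hk k) (s - k * T) (by linarith) hk2
  rwa [hψ.2.2, add_sub_cancel] at this

end Aux2

section Aux3

variable {E : Type*} [NormedAddCommGroup E]

/-- Uniform perturbation: an open condition that holds for `φ₀` on a compact set of
(point, time) pairs persists for all small parameters. -/
lemma perturb {φ : ℝ → E → ℝ → E} (hφ : IsParamFlow φ)
    {C : Set (E × ℝ)} (hC : IsCompact C) {O : Set E} (hO : IsOpen O)
    (h0 : ∀ p ∈ C, φ 0 p.1 p.2 ∈ O) :
    ∃ δ, 0 < δ ∧ ∀ l, 0 ≤ l → l ≤ 1 → l < δ → ∀ p ∈ C, φ l p.1 p.2 ∈ O := by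
  classical
  set F : ℝ × (E × ℝ) → E := fun q => φ q.1 q.2.1 q.2.2 with hF
  set D : Set (ℝ × (E × ℝ)) := (Icc (0:ℝ) 1) ×ˢ (univ : Set (E × ℝ)) with hD
  have hmemD : ∀ p : E × ℝ, ((0:ℝ), p) ∈ D := fun p => ⟨⟨le_refl _, zero_le_one⟩, mem_univ _⟩
  have hsel : ∀ p : E × ℝ, p ∈ C → ∃ ε > (0:ℝ), ∃ Bp : Set (E × ℝ), Bp ∈ 𝓝 p ∧
      ∀ l, 0 ≤ l → l ≤ 1 → |l| < ε → ∀ q ∈ Bp, φ l q.1 q.2 ∈ O := by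
    intro p hp
    have hcw : ContinuousWithinAt F D (0, p) := hφ.1 _ (hmemD p)
    have hmem : F ⁻¹' O ∈ 𝓝[D] (0, p) :=
      hcw (hO.mem_nhds (h0 p hp))
    rw [hD, nhdsWithin_prod_eq, nhdsWithin_univ] at hmem
    obtain ⟨A, hA, Bp, hBp, hAB⟩ := Filter.mem_prod_iff.mp hmem
    obtain ⟨u, hu_open, hu0, huA⟩ := mem_nhdsWithin.mp hA
    obtain ⟨ε, hε, hball⟩ := Metric.isOpen_iff.mp hu_open 0 hu0
    refine ⟨ε, hε, Bp, hBp, ?_⟩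
    intro l hl0 hl1 hlε q hq
    have hlu : l ∈ u := hball (by simpa [Real.dist_eq] using hlε)
    have hlA : l ∈ A := huA ⟨hlu, hl0, hl1⟩
    exact hAB (Set.mk_mem_prod hlA hq)
  choose! ε hε Bp hBp hgood using hsel
  have hopen : ∀ i : C, IsOpen (interior (Bp i)) := fun _ => isOpen_interior
  obtain ⟨sfin, hsfin⟩ := hC.elim_finite_subcover (fun i : C => interior (Bp i)) hopen
    (fun p hp => mem_iUnion.mpr ⟨⟨p, hp⟩, mem_interior_iff_mem_nhds.mpr (hBp p hp)⟩)
  obtain ⟨δ, hδ, hδle⟩ := finset_min_pos sfin (fun i => ε i) (fun i hi => hε i i.2)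
  refine ⟨δ, hδ, ?_⟩
  intro l hl0 hl1 hlδ p hp
  obtain ⟨i, hi, hpi⟩ := mem_iUnion₂.mp (hsfin hp)
  exact hgood i i.2 l hl0 hl1 (by rw [abs_of_nonneg hl0]; exact lt_of_lt_of_le hlδ (hδle i hi))
    p (interior_subset hpi)

variable [NormedSpace ℝ E]

/-- A closed ball of positive radius is homeomorphic to the closed unit ball. -/
noncomputable def ballHomeo (c : E) {r : ℝ} (hr : 0 < r) :
    (closedBall c r : Set E) ≃ₜ (closedBall (0:E) 1 : Set E) where
  toFun y := ⟨r⁻¹ • ((y : E) - c), by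
    simp only [mem_closedBall, dist_zero_right, norm_smul, norm_inv, Real.norm_eq_abs,
      abs_of_pos hr]
    rw [inv_mul_le_iff₀ hr, mul_one]
    exact (mem_closedBall_iff_norm).mp y.2⟩
  invFun x := ⟨c + r • (x : E), by
    simp only [mem_closedBall, dist_eq_norm, add_sub_cancel_left, norm_smul,
      Real.norm_eq_abs, abs_of_pos hr]
    have hx : ‖(x : E)‖ ≤ 1 := mem_closedBall_zero_iff.mp x.2
    nlinarith⟩
  left_inv y := by
    ext
    simp [smul_smul, mul_inv_cancel₀ hr.ne']
  right_inv x := by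
    ext
    simp [smul_smul, inv_mul_cancel₀ hr.ne']
  continuous_toFun := by
    apply Continuous.subtype_mk
    exact (continuous_subtype_val.sub continuous_const).const_smul _
  continuous_invFun := by
    apply Continuous.subtype_mk
    exact continuous_const.add (continuous_subtype_val.const_smul _)

end Aux3

/-- For a parametrized family of dissipative flows on `ℝⁿ` and a
continuation `(K_λ)` of the global attractor `K₀` by attractors, for all small `λ > 0`
the set `K_λ` is cellular: it has a neighborhood basis consisting of sets homeomorphic
to the closed unit ball, obtained as images `φ_λ(B,t)` of a fixed closed ball
`B ⊇ K_λ` contained in `A_λ(K_λ)`. -/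
theorem continuation_attractor_cellular {n : ℕ}
    (φ : ℝ → EuclideanSpace ℝ (Fin n) → ℝ → EuclideanSpace ℝ (Fin n))
    (hφ : IsParamFlow φ)
    (hdiss : ∀ l ∈ Icc (0 : ℝ) 1, Dissipative (φ l))
    (lam1 : ℝ) (hlam1 : lam1 ∈ Ioc (0 : ℝ) 1)
    (K : ℝ → Set (EuclideanSpace ℝ (Fin n)))
    (hcont : IsContinuation φ (Icc 0 lam1) K)
    (hK0 : IsGlobalAttractor (φ 0) (K 0))
    (hattr : ∀ l ∈ Ioc (0 : ℝ) lam1, IsAttractor (φ l) (K l)) :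
    ∃ lam0, 0 < lam0 ∧ lam0 ≤ lam1 ∧ ∀ l, 0 < l → l < lam0 →
      ∃ c : EuclideanSpace ℝ (Fin n), ∃ r > 0,
        K l ⊆ ball c r ∧ closedBall c r ⊆ attractionRegion (φ l) (K l) ∧
        ∀ U ∈ nhdsSet (K l), ∃ t : ℝ,
          (fun x => φ l x t) '' closedBall c r ⊆ U ∧
          K l ⊆ interior ((fun x => φ l x t) '' closedBall c r) ∧
          Nonempty ((↥((fun x => φ l x t) '' closedBall c r)) ≃ₜ
            (↥(closedBall (0 : EuclideanSpace ℝ (Fin n)) 1))) := by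

  obtain ⟨hlam1pos, hlam11⟩ := hlam1
  have h0mem : (0:ℝ) ∈ Icc 0 lam1 := ⟨le_refl _, hlam1pos.le⟩
  have hflow0 : IsFlow (φ 0) := hφ.2 0 ⟨le_refl _, zero_le_one⟩
  obtain ⟨hK0c, hK0inv, hK0st, hK0A⟩ := hK0
  obtain ⟨N0, hN0⟩ := (hcont.1 0 h0mem).2.2
  have hN0c : IsCompact N0 := hN0.1
  have hKN0 : K 0 ⊆ interior N0 := hN0.2.1
  -- a stability neighborhood of `K 0` inside `interior N0`
  have hintN0 : interior N0 ∈ nhdsSet (K 0) := isOpen_interior.mem_nhdsSet.mpr hKN0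
  obtain ⟨V, hV, hVU⟩ := hK0st (interior N0) hintN0
  have hKV : K 0 ⊆ interior V ∩ interior N0 :=
    subset_inter (subset_interior_iff_mem_nhdsSet.mpr hV) hKN0
  obtain ⟨L, hLc, hKL, hLsub⟩ :=
    exists_compact_between hK0c (isOpen_interior.inter isOpen_interior) hKV
  set W := interior L with hWdef
  have hWopen : IsOpen W := isOpen_interior
  have hKW : K 0 ⊆ W := hKL
  set C := closure W with hCdef
  have hCL : C ⊆ L := closure_minimal interior_subset hLc.isClosed
  have hCc : IsCompact C := hLc.of_isClosed_subset isClosed_closure hCL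
  have hCV : C ⊆ V := fun y hy => interior_subset (hLsub (hCL hy)).1
  have hWC : W ⊆ C := subset_closure
  have hCstay : ∀ y ∈ C, ∀ s, 0 ≤ s → φ 0 y s ∈ interior N0 :=
    fun y hy s hs => hVU y (hCV hy) s hs
  have hWnhds : W ∈ nhdsSet (K 0) := hWopen.mem_nhdsSet.mpr hKW
  have hCA : C ⊆ attractionRegion (φ 0) (K 0) := by rw [hK0A]; exact subset_univ _
  obtain ⟨T₀, hT₀0, hT₀⟩ := uniform_attract hflow0 hK0st hCc hCA hWnhds
  set T := max T₀ 1 with hTdef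
  have hTpos : (0:ℝ) < T := lt_of_lt_of_le one_pos (le_max_right _ _)
  have hCT : ∀ y ∈ C, φ 0 y T ∈ W := fun y hy => hT₀ y hy T (le_max_left _ _)
  -- a big ball around `N0`
  obtain ⟨r₀, hr₀⟩ := hN0c.isBounded.subset_closedBall 0
  set r := max r₀ 0 + 1 with hrdef
  have hrpos : (0:ℝ) < r := by positivity
  have hNball : N0 ⊆ ball (0 : EuclideanSpace ℝ (Fin n)) r := fun x hx => by
    have h1 : dist x 0 ≤ r₀ := hr₀ hx
    have h2 : r₀ ≤ max r₀ 0 := le_max_left _ _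
    exact mem_ball.mpr (by rw [hrdef]; linarith)
  set B := closedBall (0 : EuclideanSpace ℝ (Fin n)) r with hBdef
  have hBc : IsCompact B := isCompact_closedBall _ _
  have hBA0 : B ⊆ attractionRegion (φ 0) (K 0) := by rw [hK0A]; exact subset_univ _
  obtain ⟨T₁, hT₁0, hT₁⟩ := uniform_attract hflow0 hK0st hBc hBA0 hWnhds
  -- the four smallness thresholds
  obtain ⟨δ₁, hδ₁, hP1⟩ := perturb hφ (hCc.prod (isCompact_Icc (a := (0:ℝ)) (b := T)))
    isOpen_interior (fun p hp => hCstay p.1 hp.1 p.2 hp.2.1 )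
  obtain ⟨δ₂, hδ₂, hP2⟩ := perturb hφ (hCc.prod isCompact_singleton) hWopen
    (fun p hp => by
      have h2 : p.2 = T := hp.2
      rw [h2]; exact hCT p.1 hp.1)
  obtain ⟨δ₃, hδ₃, hP3⟩ := perturb hφ (hBc.prod isCompact_singleton) hWopen
    (fun p hp => by
      have h2 : p.2 = T₁ := hp.2
      rw [h2]; exact hT₁ p.1 hp.1 T₁ le_rfl)
  obtain ⟨δ₄, hδ₄, hP4⟩ := hcont.2 0 h0mem N0 hN0
  refine ⟨min (min δ₁ δ₂) (min δ₃ (min δ₄ lam1)), by positivity, ?_, ?_⟩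
  · exact le_trans (min_le_right _ _) (le_trans (min_le_right _ _) (min_le_right _ _))
  intro l hl0 hllam0
  have hlδ₁ : l < δ₁ := lt_of_lt_of_le hllam0 ((min_le_left _ _).trans (min_le_left _ _))
  have hlδ₂ : l < δ₂ := lt_of_lt_of_le hllam0 ((min_le_left _ _).trans (min_le_right _ _))
  have hlδ₃ : l < δ₃ := lt_of_lt_of_le hllam0 ((min_le_right _ _).trans (min_le_left _ _))
  have hlδ₄ : l < δ₄ := lt_of_lt_of_le hllam0
    ((min_le_right _ _).trans ((min_le_right _ _).trans (min_le_left _ _)))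
  have hllam1 : l ≤ lam1 := le_of_lt (lt_of_lt_of_le hllam0
    ((min_le_right _ _).trans ((min_le_right _ _).trans (min_le_right _ _))))
  have hl1 : l ≤ 1 := hllam1.trans hlam11
  have hlIcc : l ∈ Icc (0:ℝ) 1 := ⟨hl0.le, hl1⟩
  have hflowl : IsFlow (φ l) := hφ.2 l hlIcc
  have hNl : IsIsolatingNbhd (φ l) N0 (K l) := hP4 l ⟨hl0.le, hllam1⟩
    (by rw [sub_zero, abs_of_pos hl0]; exact hlδ₄)
  have hKb : K l ⊆ ball (0 : EuclideanSpace ℝ (Fin n)) r := (hNl.2.1.trans interior_subset).trans hNball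
  -- B is contained in the region of attraction of K l
  have hBA : B ⊆ attractionRegion (φ l) (K l) := by
    intro x hx
    have hy : φ l x T₁ ∈ W := hP3 l hl0.le hl1 hlδ₃ (x, T₁) ⟨hx, rfl⟩
    have hladder := ladder hflowl hTpos
      (fun y hy s hs0 hsT => hP1 l hl0.le hl1 hlδ₁ (y, s) ⟨hy, hs0, hsT⟩)
      (fun y hy => hWC (hP2 l hl0.le hl1 hlδ₂ (y, T) ⟨hy, rfl⟩))
    have hstay : ∀ s, T₁ ≤ s → φ l x s ∈ N0 := by
      intro s hs
      have h3 := hladder _ (hWC hy) (s - T₁) (by linarith)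
      rw [hflowl.2.2, add_sub_cancel] at h3
      exact interior_subset h3
    refine ⟨(hdiss l hlIcc).1 x, ?_⟩
    exact hNl.2.2.2 _ (flowInvariant_omega hflowl x)
      (omega_subset_of_eventually hN0c.isClosed hT₁0 hstay)
  refine ⟨0, r, hrpos, hKb, hBA, ?_⟩
  intro U hU
  obtain ⟨hKlc, hKlinv, hKlst, hKlA⟩ := hattr l ⟨hl0, hllam1⟩
  obtain ⟨T₂, hT₂0, hT₂⟩ := uniform_attract hflowl hKlst hBc hBA hU
  set h := flowHomeo hflowl T₂ with hhdef
  have himg : (fun x => φ l x T₂) '' closedBall (0 : EuclideanSpace ℝ (Fin n)) r = h '' closedBall (0 : EuclideanSpace ℝ (Fin n)) r := rfl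
  refine ⟨T₂, ?_, ?_, ?_⟩
  · rintro _ ⟨x, hx, rfl⟩; exact hT₂ x hx T₂ le_rfl
  · have hKsub : K l ⊆ h '' ball (0 : EuclideanSpace ℝ (Fin n)) r := by
      intro z hz
      rw [← hKlinv T₂] at hz
      obtain ⟨w, hw, rfl⟩ := hz
      exact mem_image_of_mem _ (hKb hw)
    refine hKsub.trans ?_
    rw [himg, ← h.image_interior, interior_closedBall _ hrpos.ne']
  · exact ⟨(Homeomorph.setCongr himg).trans
      (((h.image (closedBall (0 : EuclideanSpace ℝ (Fin n)) r)).symm).trans (ballHomeo (0 : EuclideanSpace ℝ (Fin n)) hrpos))⟩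
end
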